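/- Let X ⊆ ℝ be a finite set and 0 < ε ≤ ε'. Then VR_ε(X) ⊆ VR_{ε'}(X), and for every q ≥ 1 the map on q-th homology induced by inclusion, H_q(VR_ε(X)) → H_q(VR_{ε'}(X)), is the zero map; consequently all persistent Betti numbers β_q^{ε,ε'} vanish for q ≥ 1. -/

import Mathlib

open Finset

/-- The `q`-dimensional simplices of the Vietoris–Rips complex `VR_ε(X)` on a finite
set `X ⊆ ℝ`: subsets of `X` with `q + 1` elements and diameter at most `ε`. -/
def VRSimp (X : Finset ℝ) (ε : ℝ) (q : ℕ) : Type :=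
  {σ : Finset ℝ // σ ⊆ X ∧ σ.card = q + 1 ∧ ∀ x ∈ σ, ∀ y ∈ σ, |x - y| ≤ ε}

/-- The space of simplicial `q`-chains of `VR_ε(X)` with coefficients in `k`. -/
abbrev VRChain (k : Type) [Field k] (X : Finset ℝ) (ε : ℝ) (q : ℕ) : Type :=
  VRSimp X ε q →₀ k

/-- The `i`-th face of a `(q+1)`-simplex: remove the `i`-th smallest vertex. -/
noncomputable def VRFace {X : Finset ℝ} {ε : ℝ} {q : ℕ} (σ : VRSimp X ε (q + 1)) (i : Fin (q + 2)) :
    VRSimp X ε q :=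
  ⟨σ.1.erase (σ.1.orderEmbOfFin σ.2.2.1 i),
    fun x hx => σ.2.1 (Finset.mem_of_mem_erase hx),
    by
      have h := Finset.card_erase_of_mem (Finset.orderEmbOfFin_mem σ.1 σ.2.2.1 i)
      have h2 := σ.2.2.1
      omega,
    fun x hx y hy => σ.2.2.2 x (Finset.mem_of_mem_erase hx) y (Finset.mem_of_mem_erase hy)⟩

/-- The simplicial boundary map `∂ : C_{q+1} → C_q` with the usual alternating signs,
using the linear order on the vertices (which lie in `ℝ`). -/
noncomputable def VRBoundary (k : Type) [Field k] (X : Finset ℝ) (ε : ℝ) (q : ℕ) :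
    VRChain k X ε (q + 1) →ₗ[k] VRChain k X ε q :=
  Finsupp.lsum k fun σ =>
    LinearMap.toSpanSingleton k (VRChain k X ε q)
      (∑ i : Fin (q + 2), (-1 : k) ^ (i : ℕ) • Finsupp.single (VRFace σ i) (1 : k))

/-- The `(q+1)`-cycles of `VR_ε(X)`. -/
noncomputable def VRCycles (k : Type) [Field k] (X : Finset ℝ) (ε : ℝ) (q : ℕ) :
    Submodule k (VRChain k X ε (q + 1)) :=
  LinearMap.ker (VRBoundary k X ε q)

/-- The `(q+1)`-boundaries of `VR_ε(X)`. -/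
noncomputable def VRBoundaries (k : Type) [Field k] (X : Finset ℝ) (ε : ℝ) (q : ℕ) :
    Submodule k (VRChain k X ε (q + 1)) :=
  LinearMap.range (VRBoundary k X ε (q + 1))


/-- A simplex of `VR_ε(X)`: a nonempty subset of `X` of diameter at most `ε`. -/
def IsVRSimplex (X : Finset ℝ) (ε : ℝ) (σ : Finset ℝ) : Prop :=
  σ.Nonempty ∧ σ ⊆ X ∧ ∀ x ∈ σ, ∀ y ∈ σ, |x - y| ≤ ε

/-- The inclusion of simplices of `VR_ε(X)` into simplices of `VR_ε'(X)` for `ε ≤ ε'`. -/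
def VRSimpInc (X : Finset ℝ) {ε ε' : ℝ} (h : ε ≤ ε') (q : ℕ) (σ : VRSimp X ε q) :
    VRSimp X ε' q :=
  ⟨σ.1, σ.2.1, σ.2.2.1, fun x hx y hy => (σ.2.2.2 x hx y hy).trans h⟩


/-! ### Auxiliary development -/

section Aux

open Finsupp

variable {k : Type} [Field k] {X : Finset ℝ} {ε ε' : ℝ} {q : ℕ}

noncomputable instance VRSimp.decEq (X : Finset ℝ) (ε : ℝ) (q : ℕ) : DecidableEq (VRSimp X ε q) := by
  unfold VRSimp; infer_instance

theorem VRSimp.nonempty (σ : VRSimp X ε q) : σ.1.Nonempty := by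
  apply Finset.card_pos.1; rw [σ.2.2.1]; omega

/-- The minimal vertex of a simplex. -/
noncomputable def minV (σ : VRSimp X ε q) : ℝ := σ.1.min' σ.nonempty

theorem minV_mem (σ : VRSimp X ε q) : minV σ ∈ σ.1 := Finset.min'_mem _ _

theorem minV_le (σ : VRSimp X ε q) {x : ℝ} (hx : x ∈ σ.1) : minV σ ≤ x :=
  Finset.min'_le _ _ hx

/-- The number of vertices of `s` below `x`. -/
noncomputable def cntB (s : Finset ℝ) (x : ℝ) : ℕ := (s.filter (· < x)).card

/-- The face obtained by removing the vertex `x`. -/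
noncomputable def faceOf (σ : VRSimp X ε (q + 1)) (x : ℝ) (hx : x ∈ σ.1) : VRSimp X ε q :=
  ⟨σ.1.erase x, fun y hy => σ.2.1 (Finset.mem_of_mem_erase hy),
    by have := Finset.card_erase_of_mem hx; have := σ.2.2.1; omega,
    fun a ha b hb => σ.2.2.2 a (Finset.mem_of_mem_erase ha) b (Finset.mem_of_mem_erase hb)⟩

theorem cntB_orderEmbOfFin (s : Finset ℝ) {n : ℕ} (h : s.card = n) (i : Fin n) :
    cntB s (s.orderEmbOfFin h i) = (i : ℕ) := by
  have hmem : ∀ x, x ∈ s → ∃ j, s.orderEmbOfFin h j = x := by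
    intro x hx
    have : x ∈ Set.range (s.orderEmbOfFin h) := by
      rw [Finset.range_orderEmbOfFin]; exact hx
    exact this
  have himg : s.filter (· < s.orderEmbOfFin h i)
      = (Finset.univ.filter (fun j : Fin n => j < i)).image (s.orderEmbOfFin h) := by
    ext x
    simp only [Finset.mem_filter, Finset.mem_image, Finset.mem_univ, true_and]
    constructor
    · rintro ⟨hxs, hlt⟩
      obtain ⟨j, rfl⟩ := hmem x hxs
      exact ⟨j, (s.orderEmbOfFin h).lt_iff_lt.1 hlt, rfl⟩
    · rintro ⟨j, hji, rfl⟩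
      exact ⟨Finset.orderEmbOfFin_mem s h j, (s.orderEmbOfFin h).strictMono hji⟩
  rw [cntB, himg, Finset.card_image_of_injective _ (s.orderEmbOfFin h).injective]
  have : Finset.univ.filter (fun j : Fin n => j < i) = Finset.Iio i := by
    ext j; simp
  rw [this, Fin.card_Iio]

theorem boundary_single_one (σ : VRSimp X ε (q + 1)) :
    VRBoundary k X ε q (Finsupp.single σ 1) =
      ∑ x ∈ σ.1, if hx : x ∈ σ.1
        then ((-1 : k) ^ cntB σ.1 x) • Finsupp.single (faceOf σ x hx) (1 : k) else 0 := by
  have h1 : VRBoundary k X ε q (Finsupp.single σ 1)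
      = ∑ i : Fin (q + 2), (-1 : k) ^ (i : ℕ) • Finsupp.single (VRFace σ i) (1 : k) := by
    rw [VRBoundary, Finsupp.lsum_single, LinearMap.toSpanSingleton_apply, one_smul]
  rw [h1]
  refine Finset.sum_bij (fun i _ => σ.1.orderEmbOfFin σ.2.2.1 i) ?_ ?_ ?_ ?_
  · intro i _; exact Finset.orderEmbOfFin_mem _ _ _
  · intro i _ j _ hij; exact (σ.1.orderEmbOfFin σ.2.2.1).injective hij
  · intro x hx
    have : x ∈ Set.range (σ.1.orderEmbOfFin σ.2.2.1) := by
      rw [Finset.range_orderEmbOfFin]; exact hx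
    obtain ⟨j, rfl⟩ := this
    exact ⟨j, Finset.mem_univ _, rfl⟩
  · intro i _
    rw [dif_pos (Finset.orderEmbOfFin_mem σ.1 σ.2.2.1 i), cntB_orderEmbOfFin]
    rfl

theorem boundary_apply_sum (z : VRChain k X ε (q + 1)) :
    VRBoundary k X ε q z
      = ∑ σ ∈ z.support, z σ • VRBoundary k X ε q (Finsupp.single σ 1) := by
  conv_lhs => rw [← Finsupp.sum_single z]
  rw [Finsupp.sum, map_sum]
  refine Finset.sum_congr rfl fun σ _ => ?_
  rw [← map_smul, Finsupp.smul_single, smul_eq_mul, mul_one]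

theorem coeff_boundary_single (σ : VRSimp X ε (q + 1)) (τ : VRSimp X ε q) :
    (VRBoundary k X ε q (Finsupp.single σ 1)) τ
      = ∑ x ∈ σ.1, if (σ.1.erase x = τ.1) then (-1 : k) ^ cntB σ.1 x else 0 := by
  rw [boundary_single_one, Finsupp.finset_sum_apply]
  refine Finset.sum_congr rfl fun x hx => ?_
  rw [dif_pos hx, Finsupp.smul_apply, Finsupp.single_apply]
  have hiff : (faceOf σ x hx = τ) ↔ (σ.1.erase x = τ.1) := by
    constructor
    · intro hEq; rw [← hEq]; rfl
    · intro hEq; exact Subtype.ext hEq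
  rw [if_congr hiff rfl rfl, smul_ite, smul_eq_mul, mul_one, smul_zero]

theorem coeff_boundary_single_eq (σ : VRSimp X ε (q + 1)) (τ : VRSimp X ε q)
    {v : ℝ} (hv : v ∈ σ.1) (hτ : τ.1 = σ.1.erase v) :
    (VRBoundary k X ε q (Finsupp.single σ 1)) τ = (-1 : k) ^ cntB σ.1 v := by
  rw [coeff_boundary_single]
  rw [Finset.sum_eq_single v]
  · rw [if_pos hτ.symm]
  · intro x hx hne
    rw [if_neg]
    intro hEq
    have hvx : v ∈ σ.1.erase x := Finset.mem_erase.2 ⟨fun hc => hne (hc ▸ rfl), hv⟩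
    rw [hEq, hτ] at hvx
    exact (Finset.notMem_erase v σ.1) hvx
  · intro hc; exact absurd hv hc

theorem coeff_ne_zero_exists (σ : VRSimp X ε (q + 1)) (τ : VRSimp X ε q)
    (h : (VRBoundary k X ε q (Finsupp.single σ 1)) τ ≠ 0) :
    ∃ x ∈ σ.1, τ.1 = σ.1.erase x := by
  rw [coeff_boundary_single] at h
  obtain ⟨x, hx, hne⟩ := Finset.exists_ne_zero_of_sum_ne_zero h
  by_cases hc : σ.1.erase x = τ.1
  · exact ⟨x, hx, hc.symm⟩
  · rw [if_neg hc] at hne; exact absurd rfl hne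

theorem support_boundary_single (σ : VRSimp X ε (q + 1)) :
    (VRBoundary k X ε q (Finsupp.single σ 1)).support ⊆
      σ.1.attach.image fun x => faceOf σ x.1 x.2 := by
  rw [boundary_single_one]
  refine Finsupp.support_finset_sum.trans ?_
  intro τ hτ
  rw [Finset.mem_biUnion] at hτ
  obtain ⟨x, hx, hτ⟩ := hτ
  rw [dif_pos hx] at hτ
  have := Finsupp.support_smul.trans Finsupp.support_single_subset hτ
  rw [Finset.mem_singleton] at this
  exact Finset.mem_image.2 ⟨⟨x, hx⟩, Finset.mem_attach _ _, this.symm⟩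

theorem cntB_erase (s : Finset ℝ) {x y : ℝ} (hx : x ∈ s) (hne : x ≠ y) :
    cntB (s.erase x) y + (if x < y then 1 else 0) = cntB s y := by
  unfold cntB
  rw [Finset.filter_erase]
  by_cases h : x < y
  · have hmem : x ∈ s.filter (· < y) := Finset.mem_filter.2 ⟨hx, h⟩
    rw [if_pos h, Finset.card_erase_of_mem hmem]
    have : 0 < (s.filter (· < y)).card := Finset.card_pos.2 ⟨x, hmem⟩
    omega
  · have hnmem : x ∉ s.filter (· < y) := fun hc => h (Finset.mem_filter.1 hc).2
    rw [if_neg h, Finset.erase_eq_of_notMem hnmem, add_zero]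

theorem sign_cancel {s : Finset ℝ} {x y : ℝ} (hx : x ∈ s) (hy : y ∈ s) (hne : x ≠ y) :
    (-1 : k) ^ (cntB s x + cntB (s.erase x) y)
      + (-1 : k) ^ (cntB s y + cntB (s.erase y) x) = 0 := by
  rcases lt_or_gt_of_ne hne with h | h
  · have e1 : cntB (s.erase x) y + 1 = cntB s y := by
      have := cntB_erase s hx hne; rwa [if_pos h] at this
    have e2 : cntB (s.erase y) x = cntB s x := by
      have := cntB_erase s hy hne.symm; rwa [if_neg (not_lt.2 h.le), add_zero] at this
    rw [e2, ← e1, show cntB (s.erase x) y + 1 + cntB s x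
        = (cntB s x + cntB (s.erase x) y) + 1 by omega, pow_succ]
    ring
  · have e1 : cntB (s.erase y) x + 1 = cntB s x := by
      have := cntB_erase s hy hne.symm; rwa [if_pos h] at this
    have e2 : cntB (s.erase x) y = cntB s y := by
      have := cntB_erase s hx hne; rwa [if_neg (not_lt.2 h.le), add_zero] at this
    rw [e2, ← e1, show cntB (s.erase y) x + 1 + cntB s y
        = (cntB s y + cntB (s.erase y) x) + 1 by omega, pow_succ]
    ring

theorem boundary_boundary (σ : VRSimp X ε (q + 2)) :
    VRBoundary k X ε q (VRBoundary k X ε (q + 1) (Finsupp.single σ 1)) = 0 := by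
  ext τ
  rw [Finsupp.coe_zero, Pi.zero_apply, boundary_single_one, map_sum, Finsupp.finset_sum_apply]
  have hterm : ∀ x ∈ σ.1,
      (VRBoundary k X ε q (if hx : x ∈ σ.1
        then ((-1 : k) ^ cntB σ.1 x) • Finsupp.single (faceOf σ x hx) (1 : k) else 0)) τ
      = ∑ y ∈ σ.1.erase x, if ((σ.1.erase x).erase y = τ.1)
          then (-1 : k) ^ (cntB σ.1 x + cntB (σ.1.erase x) y) else 0 := by
    intro x hx
    rw [dif_pos hx, map_smul, Finsupp.smul_apply, coeff_boundary_single, smul_eq_mul,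
      Finset.mul_sum]
    refine Finset.sum_congr rfl fun y hy => ?_
    rw [mul_ite, mul_zero, ← pow_add]
    rfl
  rw [Finset.sum_congr rfl hterm, Finset.sum_sigma']
  refine Finset.sum_involution (fun p _ => ⟨p.2, p.1⟩) ?_ ?_ ?_ ?_
  · intro p hp
    dsimp only
    rw [Finset.mem_sigma] at hp
    obtain ⟨h1, h2⟩ := hp
    have hne : p.2 ≠ p.1 := (Finset.mem_erase.1 h2).1
    have h2' : p.2 ∈ σ.1 := Finset.mem_of_mem_erase h2
    by_cases hc : (σ.1.erase p.1).erase p.2 = τ.1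
    · rw [if_pos hc, if_pos (by rwa [Finset.erase_right_comm])]
      exact sign_cancel h1 h2' (Ne.symm hne)
    · rw [if_neg hc, if_neg (by rwa [Finset.erase_right_comm]), add_zero]
  · intro p hp _
    rw [Finset.mem_sigma] at hp
    intro hc
    have hne : p.2 ≠ p.1 := (Finset.mem_erase.1 hp.2).1
    exact hne (congrArg Sigma.fst hc)
  · intro p hp
    rw [Finset.mem_sigma] at hp ⊢
    obtain ⟨h1, h2⟩ := hp
    exact ⟨Finset.mem_of_mem_erase h2,
      Finset.mem_erase.2 ⟨Ne.symm (Finset.mem_erase.1 h2).1, h1⟩⟩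
  · intro p _; rfl

theorem boundary_mapDomain (h : ε ≤ ε') (z : VRChain k X ε (q + 1)) :
    VRBoundary k X ε' q (Finsupp.mapDomain (VRSimpInc X h (q + 1)) z)
      = Finsupp.mapDomain (VRSimpInc X h q) (VRBoundary k X ε q z) := by
  induction z using Finsupp.induction_linear with
  | zero => rw [Finsupp.mapDomain_zero, map_zero, map_zero, Finsupp.mapDomain_zero]
  | add f g hf hg =>
      rw [Finsupp.mapDomain_add, map_add, map_add, Finsupp.mapDomain_add, hf, hg]
  | single σ b =>
      rw [Finsupp.mapDomain_single]
      have hb : ∀ (ε₀ : ℝ) (ρ : VRSimp X ε₀ (q+1)),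
          Finsupp.single ρ b = b • Finsupp.single ρ (1 : k) := by
        intro ε₀ ρ; rw [Finsupp.smul_single, smul_eq_mul, mul_one]
      rw [hb ε' _, hb ε _, map_smul, map_smul, Finsupp.mapDomain_smul]
      congr 1
      rw [boundary_single_one, boundary_single_one]
      rw [Finsupp.mapDomain_finset_sum]
      refine Finset.sum_congr rfl fun x hx => ?_
      rw [dif_pos (show x ∈ (VRSimpInc X h (q + 1) σ).1 from hx), dif_pos hx,
        Finsupp.mapDomain_smul, Finsupp.mapDomain_single]
      rfl

/-- The largest point of `X` within distance `ε` to the right of `m`. -/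
noncomputable def nextPt (X : Finset ℝ) (ε m : ℝ) : ℝ :=
  WithBot.unbotD m ((X.filter (fun x => x ≤ m + ε)).max)

theorem nextPt_spec {m : ℝ} (hm : m ∈ X) (hε : 0 ≤ ε) :
    nextPt X ε m ∈ X ∧ nextPt X ε m ≤ m + ε ∧
      ∀ x ∈ X, x ≤ m + ε → x ≤ nextPt X ε m := by
  have hmf : m ∈ X.filter (fun x => x ≤ m + ε) := by
    rw [Finset.mem_filter]; exact ⟨hm, by linarith⟩
  have hne : (X.filter (fun x => x ≤ m + ε)).Nonempty := ⟨m, hmf⟩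
  have hmax : (X.filter (fun x => x ≤ m + ε)).max
      = ((X.filter (fun x => x ≤ m + ε)).max' hne : ℝ) := (Finset.coe_max' hne).symm
  have hval : nextPt X ε m = (X.filter (fun x => x ≤ m + ε)).max' hne := by
    unfold nextPt
    rw [hmax]
    rfl
  have hmem := Finset.max'_mem _ hne
  rw [Finset.mem_filter] at hmem
  refine ⟨hval ▸ hmem.1, hval ▸ hmem.2, fun x hx hxle => ?_⟩
  rw [hval]
  exact Finset.le_max' _ x (by rw [Finset.mem_filter]; exact ⟨hx, hxle⟩)

/-- Weight of a simplex in the termination measure: zero for "good" simplices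
(which contain the next point after their min), a big power otherwise. -/
noncomputable def badWt (X : Finset ℝ) (ε : ℝ) {q : ℕ} (σ : VRSimp X ε (q + 1)) : ℕ :=
  if nextPt X ε (minV σ) ∈ σ.1 then 0
  else (X.card + 1) ^ (X.filter (fun x => minV σ ≤ x)).card

noncomputable def msr (z : VRChain k X ε (q + 1)) : ℕ := ∑ σ ∈ z.support, badWt X ε σ

theorem eq_zero_of_allGood (hε : 0 ≤ ε) (z : VRChain k X ε (q + 1))
    (hz : VRBoundary k X ε q z = 0)
    (hg : ∀ σ ∈ z.support, nextPt X ε (minV σ) ∈ σ.1) : z = 0 := by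
  by_contra hne
  have hsupp : z.support.Nonempty := Finsupp.support_nonempty_iff.2 hne
  obtain ⟨σ₀, hσ₀, hmin⟩ := Finset.exists_min_image z.support minV hsupp
  set m := minV σ₀ with hm
  set v := nextPt X ε m with hv
  have hvσ : v ∈ σ₀.1 := hg σ₀ hσ₀
  have hmσ : m ∈ σ₀.1 := minV_mem σ₀
  have hmX : m ∈ X := σ₀.2.1 hmσ
  obtain ⟨y, hy, hym⟩ : ∃ y ∈ σ₀.1, y ≠ m := by
    have hcard : 2 ≤ σ₀.1.card := by rw [σ₀.2.2.1]; omega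
    obtain ⟨y, hy, hne'⟩ := Finset.exists_mem_ne hcard m
    exact ⟨y, hy, hne'⟩
  have hyX : y ∈ X := σ₀.2.1 hy
  have hy_le : y ≤ m + ε := by
    have := σ₀.2.2.2 y hy m hmσ
    rw [abs_sub_le_iff] at this
    linarith [this.1]
  have hmy : m < y := lt_of_le_of_ne (minV_le σ₀ hy) (Ne.symm hym)
  have hmv : m < v := lt_of_lt_of_le hmy ((nextPt_spec hmX hε).2.2 y hyX hy_le)
  set τ : VRSimp X ε q := faceOf σ₀ v hvσ with hτ
  have hτv : τ.1 = σ₀.1.erase v := rfl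
  have key : ∀ ρ ∈ z.support, ρ ≠ σ₀ →
      (VRBoundary k X ε q (Finsupp.single ρ 1)) τ = 0 := by
    intro ρ hρ hρne
    by_contra hc
    obtain ⟨x, hxρ, hτx⟩ := coeff_ne_zero_exists ρ τ hc
    have hρ1 : ρ.1 = insert x τ.1 := by
      rw [hτx, Finset.insert_erase hxρ]
    have hmτ : m ∈ τ.1 := by
      rw [hτv]; exact Finset.mem_erase.2 ⟨ne_of_lt hmv, hmσ⟩
    have hmρ : m ∈ ρ.1 := by rw [hρ1]; exact Finset.mem_insert_of_mem hmτ
    have hminρ : minV ρ = m :=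
      le_antisymm (minV_le ρ hmρ) (hmin ρ hρ)
    have hvρ : v ∈ ρ.1 := by
      have := hg ρ hρ; rwa [hminρ] at this
    have hvτ : v ∉ τ.1 := by rw [hτv]; exact Finset.notMem_erase v σ₀.1
    have hxv : x = v := by
      rw [hρ1] at hvρ
      rcases Finset.mem_insert.1 hvρ with h' | h'
      · exact h'.symm
      · exact absurd h' hvτ
    have : ρ.1 = σ₀.1 := by
      rw [hρ1, hxv, hτv, Finset.insert_erase hvσ]
    exact hρne (Subtype.ext this)
  have hcoeff : (VRBoundary k X ε q z) τ = z σ₀ * ((-1 : k) ^ cntB σ₀.1 v) := by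
    rw [boundary_apply_sum, Finsupp.finset_sum_apply]
    rw [Finset.sum_eq_single σ₀]
    · rw [Finsupp.smul_apply, coeff_boundary_single_eq σ₀ τ hvσ hτv, smul_eq_mul]
    · intro ρ hρ hne'
      rw [Finsupp.smul_apply, key ρ hρ hne', smul_zero]
    · intro hc; exact absurd hσ₀ hc
  rw [hz] at hcoeff
  have hz0 : z σ₀ ≠ 0 := Finsupp.mem_support_iff.1 hσ₀
  have hpow : ((-1 : k) ^ cntB σ₀.1 v) ≠ 0 := pow_ne_zero _ (neg_ne_zero.2 one_ne_zero)
  exact (mul_ne_zero hz0 hpow) (by simpa using hcoeff.symm)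

theorem cycle_is_boundary (hε : 0 ≤ ε) (n : ℕ) :
    ∀ z : VRChain k X ε (q + 1), msr z ≤ n → VRBoundary k X ε q z = 0 →
      ∃ w, VRBoundary k X ε (q + 1) w = z := by
  induction n with
  | zero =>
      intro z hn hz
      have hg : ∀ σ ∈ z.support, nextPt X ε (minV σ) ∈ σ.1 := by
        intro σ hσ
        by_contra hbad
        have h1 : 0 < badWt X ε σ := by
          rw [badWt, if_neg hbad]
          exact Nat.pow_pos (by omega)
        have h2 : badWt X ε σ ≤ msr z :=
          Finset.single_le_sum (fun _ _ => Nat.zero_le _) hσ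
        omega
      exact ⟨0, by rw [map_zero, eq_zero_of_allGood hε z hz hg]⟩
  | succ n ih =>
      intro z hn hz
      by_cases hg : ∀ σ ∈ z.support, nextPt X ε (minV σ) ∈ σ.1
      · exact ⟨0, by rw [map_zero, eq_zero_of_allGood hε z hz hg]⟩
      push_neg at hg
      obtain ⟨σ, hσ, hbad⟩ := hg
      set m := minV σ with hm
      set v := nextPt X ε m with hv
      have hmσ : m ∈ σ.1 := minV_mem σ
      have hmX : m ∈ X := σ.2.1 hmσ
      obtain ⟨hvX, hvle, hvmax⟩ := nextPt_spec hmX hε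
      have hvm : m ≤ v := hvmax m hmX (by linarith)
      have hbound : ∀ x ∈ insert v σ.1, m ≤ x ∧ x ≤ m + ε := by
        intro x hx
        rcases Finset.mem_insert.1 hx with rfl | hx'
        · exact ⟨hvm, hvle⟩
        · refine ⟨minV_le σ hx', ?_⟩
          have := σ.2.2.2 x hx' m hmσ
          rw [abs_sub_le_iff] at this
          linarith [this.1]
      set u : VRSimp X ε (q + 2) :=
        ⟨insert v σ.1, by
            intro x hx
            rcases Finset.mem_insert.1 hx with rfl | hx'
            · exact hvX
            · exact σ.2.1 hx',
          by rw [Finset.card_insert_of_notMem hbad, σ.2.2.1],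
          by
            intro a ha b hb
            obtain ⟨ha1, ha2⟩ := hbound a ha
            obtain ⟨hb1, hb2⟩ := hbound b hb
            rw [abs_sub_le_iff]
            constructor <;> linarith⟩ with hu
      have huv : v ∈ u.1 := Finset.mem_insert_self v σ.1
      have hu_erase : u.1.erase v = σ.1 := Finset.erase_insert hbad
      set c : k := z σ * (-1 : k) ^ cntB u.1 v with hc
      set z' := z - c • VRBoundary k X ε (q + 1) (Finsupp.single u 1) with hz'def
      have hz'cycle : VRBoundary k X ε q z' = 0 := by
        rw [hz'def, map_sub, map_smul, hz, boundary_boundary, smul_zero, sub_zero]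
      have hz'σ : z' σ = 0 := by
        rw [hz'def, Finsupp.sub_apply, Finsupp.smul_apply,
          coeff_boundary_single_eq u σ huv hu_erase.symm, hc, smul_eq_mul]
        have : ((-1 : k) ^ cntB u.1 v) * ((-1 : k) ^ cntB u.1 v) = 1 := by
          rw [← pow_add]
          exact Even.neg_one_pow ⟨cntB u.1 v, by ring⟩
        calc z σ - z σ * (-1 : k) ^ cntB u.1 v * (-1 : k) ^ cntB u.1 v
            = z σ - z σ * (((-1 : k) ^ cntB u.1 v) * ((-1 : k) ^ cntB u.1 v)) := by ring
          _ = 0 := by rw [this, mul_one, sub_self]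
      -- support control
      set T := (VRBoundary k X ε (q + 1) (Finsupp.single u 1)).support.erase σ with hT
      have hsupp : z'.support ⊆ z.support.erase σ ∪ T := by
        intro ρ hρ
        have hρσ : ρ ≠ σ := by
          intro hc'; rw [hc'] at hρ
          exact Finsupp.mem_support_iff.1 hρ hz'σ
        have : ρ ∈ z.support ∪ (c • VRBoundary k X ε (q + 1) (Finsupp.single u 1)).support :=
          Finsupp.support_sub hρ
        rcases Finset.mem_union.1 this with h' | h'
        · exact Finset.mem_union_left _ (Finset.mem_erase.2 ⟨hρσ, h'⟩)
        · exact Finset.mem_union_right _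
            (Finset.mem_erase.2 ⟨hρσ, Finsupp.support_smul h'⟩)
      set B := X.card + 1 with hB
      set t := (X.filter (fun x => m ≤ x)).card with ht
      have ht1 : 1 ≤ t := Finset.card_pos.2 ⟨m, Finset.mem_filter.2 ⟨hmX, le_refl m⟩⟩
      have hwtσ : badWt X ε σ = B ^ t := by rw [badWt, if_neg hbad]
      have hminu : ∀ x ∈ u.1, m ≤ x := fun x hx => (hbound x hx).1
      -- bound the weight of elements of T
      have hTwt : ∀ ρ ∈ T, badWt X ε ρ ≤ B ^ (t - 1) := by
        intro ρ hρ
        obtain ⟨hρσ, hρsupp⟩ := Finset.mem_erase.1 hρ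
        obtain ⟨⟨x, hxu⟩, _, hρface⟩ := Finset.mem_image.1 (support_boundary_single u hρsupp)
        have hρval : ρ.1 = u.1.erase x := by rw [← hρface]; rfl
        have hxv : x ≠ v := by
          intro hc'
          apply hρσ
          apply Subtype.ext
          rw [hρval, hc', hu_erase]
        have hvρ : v ∈ ρ.1 := by
          rw [hρval]; exact Finset.mem_erase.2 ⟨Ne.symm hxv, huv⟩
        by_cases hxm : x = m
        · -- min of ρ is strictly bigger than m
          have hmρ : m ∉ ρ.1 := by rw [hρval, hxm]; exact Finset.notMem_erase m u.1
          have hminρ : m < minV ρ := by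
            rcases lt_or_eq_of_le (hminu (minV ρ) (Finset.mem_of_mem_erase
              (hρval ▸ minV_mem ρ))) with h' | h'
            · exact h'
            · exact absurd (h' ▸ minV_mem ρ) hmρ
          have hsubset : X.filter (fun x => minV ρ ≤ x) ⊂ X.filter (fun x => m ≤ x) := by
            constructor
            · intro a ha
              obtain ⟨ha1, ha2⟩ := Finset.mem_filter.1 ha
              exact Finset.mem_filter.2 ⟨ha1, le_trans (le_of_lt hminρ) ha2⟩
            · intro hc'
              have := hc' (Finset.mem_filter.2 ⟨hmX, le_refl m⟩)
              exact absurd (Finset.mem_filter.1 this).2 (not_le.2 hminρ)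
          have hcard : (X.filter (fun x => minV ρ ≤ x)).card < t :=
            Finset.card_lt_card hsubset
          rw [badWt]
          split
          · exact Nat.zero_le _
          · exact Nat.pow_le_pow_right (by omega) (by omega)
        · -- ρ contains both m and v, so it is good
          have hmρ : m ∈ ρ.1 := by
            rw [hρval]
            exact Finset.mem_erase.2 ⟨Ne.symm hxm, Finset.mem_insert_of_mem hmσ⟩
          have hminρ : minV ρ = m :=
            le_antisymm (minV_le ρ hmρ)
              (hminu (minV ρ) (Finset.mem_of_mem_erase (hρval ▸ minV_mem ρ)))
          have hgood : nextPt X ε (minV ρ) ∈ ρ.1 := by rw [hminρ, ← hv]; exact hvρ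
          rw [badWt, if_pos hgood]
          exact Nat.zero_le _
      have hTcard : T.card ≤ q + 2 := by
        have h1 : T ⊆ (u.1.attach.image fun x => faceOf u x.1 x.2).erase σ :=
          Finset.erase_subset_erase σ (support_boundary_single u)
        have hσmem : σ ∈ u.1.attach.image fun x => faceOf u x.1 x.2 :=
          Finset.mem_image.2 ⟨⟨v, huv⟩, Finset.mem_attach _ _, Subtype.ext hu_erase⟩
        have h2 := Finset.card_le_card h1
        rw [Finset.card_erase_of_mem hσmem] at h2
        have h3 : (u.1.attach.image fun x => faceOf u x.1 x.2).card ≤ q + 3 := by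
          refine le_trans Finset.card_image_le ?_
          rw [Finset.card_attach, u.2.2.1]
        omega
      have hq2B : q + 2 < B := by
        have : σ.1.card ≤ X.card := Finset.card_le_card σ.2.1
        rw [σ.2.2.1] at this
        omega
      -- measure decreases
      have hmsr : msr z' < msr z := by
        have h1 : msr z' ≤ ∑ ρ ∈ z.support.erase σ ∪ T, badWt X ε ρ :=
          Finset.sum_le_sum_of_subset hsupp
        have h2 : ∑ ρ ∈ z.support.erase σ ∪ T, badWt X ε ρ
            ≤ (∑ ρ ∈ z.support.erase σ, badWt X ε ρ) + ∑ ρ ∈ T, badWt X ε ρ := by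
          have := Finset.sum_union_inter (s₁ := z.support.erase σ) (s₂ := T)
            (f := fun ρ => badWt X ε ρ)
          omega
        have h3 : ∑ ρ ∈ T, badWt X ε ρ ≤ T.card * B ^ (t - 1) := by
          have := Finset.sum_le_card_nsmul T (fun ρ => badWt X ε ρ) (B ^ (t - 1)) hTwt
          simpa [smul_eq_mul] using this
        have h4 : T.card * B ^ (t - 1) < B ^ t := by
          calc T.card * B ^ (t - 1) ≤ (q + 2) * B ^ (t - 1) :=
                Nat.mul_le_mul_right _ hTcard
            _ < B * B ^ (t - 1) :=
                (Nat.mul_lt_mul_right (Nat.pow_pos (by omega))).2 hq2B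
            _ = B ^ t := by
                rw [← pow_succ']
                congr 1
                omega
        have h5 : msr z = badWt X ε σ + ∑ ρ ∈ z.support.erase σ, badWt X ε ρ :=
          (Finset.add_sum_erase _ _ hσ).symm
        rw [hwtσ] at h5
        have : msr z' ≤ (∑ ρ ∈ z.support.erase σ, badWt X ε ρ) + T.card * B ^ (t - 1) := by
          omega
        omega
      obtain ⟨w, hw⟩ := ih z' (by omega) hz'cycle
      refine ⟨w + c • Finsupp.single u 1, ?_⟩
      rw [map_add, map_smul, hw, hz'def]
      abel

end Aux

/-- For `0 < ε ≤ ε'`, `VR_ε(X) ⊆ VR_ε'(X)`, and the inclusion-induced map on homology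
in every degree `q + 1 ≥ 1` is the zero map: each cycle of `VR_ε(X)` is mapped to a
boundary of `VR_ε'(X)`. Consequently, all persistent Betti numbers `β_q^{ε,ε'}` vanish
for `q ≥ 1`. -/
theorem VR_persistent_homology_zero (k : Type) [Field k] (X : Finset ℝ)
    (ε ε' : ℝ) (hε : 0 < ε) (h : ε ≤ ε') :
    (∀ σ : Finset ℝ, IsVRSimplex X ε σ → IsVRSimplex X ε' σ) ∧
    (∀ q : ℕ, ∀ z : VRChain k X ε (q + 1), z ∈ VRCycles k X ε q →
      Finsupp.mapDomain (VRSimpInc X h (q + 1)) z ∈ VRBoundaries k X ε' q) := by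
  constructor
  · rintro σ ⟨h1, h2, h3⟩
    exact ⟨h1, h2, fun x hx y hy => (h3 x hx y hy).trans h⟩
  · intro q z hz
    have hz0 : VRBoundary k X ε q z = 0 := LinearMap.mem_ker.1 hz
    have hz' : VRBoundary k X ε' q (Finsupp.mapDomain (VRSimpInc X h (q + 1)) z) = 0 := by
      rw [boundary_mapDomain h z, hz0, Finsupp.mapDomain_zero]
    obtain ⟨w, hw⟩ := cycle_is_boundary (le_trans (le_of_lt hε) h)
      (msr (Finsupp.mapDomain (VRSimpInc X h (q + 1)) z))
      (Finsupp.mapDomain (VRSimpInc X h (q + 1)) z) le_rfl hz'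
    exact LinearMap.mem_range.2 ⟨w, hw⟩
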